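/- arXiv:0912.2023 — 6 statements merged into one kernel-verified Lean document; each statement's English description precedes it below -/
import Mathlib

section
/- For positive integers $i, j, N$ with $i \le j$, $\sum_{t=1}^{N} \frac{j-i}{t}\binom{t}{i}\binom{t}{j} = \sum_{l=0}^{i-1} \frac{j-i}{i}\binom{j-1}{i-l-1}\binom{l+j}{l}\binom{N+1}{l+j+1}$. -/
-- Key nat identity: C(t-1,i-1) * C(t,j) = ∑_{l<i} C(j-1, i-l-1) C(l+j,l) C(t,l+j)
lemma stmt4_key (i j t : ℕ) (hi : 1 ≤ i) (hij : i ≤ j) :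
    (t - 1).choose (i - 1) * t.choose j =
      ∑ l ∈ Finset.range i,
        (j - 1).choose (i - l - 1) * ((l + j).choose l * t.choose (l + j)) := by
  rcases lt_or_ge t j with h | h
  · rw [Nat.choose_eq_zero_of_lt h, mul_zero]
    exact (Finset.sum_eq_zero fun l _ => by
      rw [Nat.choose_eq_zero_of_lt (lt_of_lt_of_le h (Nat.le_add_left j l)), mul_zero, mul_zero]).symm
  · have h1 : ∀ l, (l + j).choose l * t.choose (l + j) = t.choose j * ((t - j).choose l) := by
      intro l
      rcases le_or_gt (l + j) t with h2 | h2
      · have h3 := Nat.choose_mul (n := t) (k := l + j) (s := j) (Nat.le_add_left j l)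
        rw [Nat.add_sub_cancel] at h3
        rw [mul_comm (t.choose (l + j))] at h3
        rw [Nat.choose_symm_add, h3]
      · rw [Nat.choose_eq_zero_of_lt h2, Nat.choose_eq_zero_of_lt (by omega : t - j < l),
          mul_zero, mul_zero]
    simp_rw [h1]
    have ht1 : j - 1 + (t - j) = t - 1 := by omega
    have hvand := Nat.add_choose_eq (j - 1) (t - j) (i - 1)
    rw [ht1] at hvand
    rw [hvand, Finset.Nat.sum_antidiagonal_eq_sum_range_succ
      (f := fun a b => (j - 1).choose a * (t - j).choose b)]
    have hi1 : i - 1 + 1 = i := by omega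
    rw [Nat.succ_eq_add_one, hi1, Finset.sum_mul, ← Finset.sum_range_reflect]
    refine Finset.sum_congr rfl fun l hl => ?_
    simp only [Finset.mem_range] at hl
    have e1 : i - 1 - (i - 1 - l) = l := by omega
    have e2 : i - 1 - l = i - l - 1 := by omega
    rw [e1, e2]
    ring

lemma stmt4_hock (N k : ℕ) (hk : 1 ≤ k) :
    ∑ t ∈ Finset.Icc 1 N, ((t.choose k : ℚ)) = ((N + 1).choose (k + 1) : ℚ) := by
  have hnat : ∑ t ∈ Finset.Icc 1 N, t.choose k = (N + 1).choose (k + 1) := by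
    rw [← Nat.sum_Icc_choose]
    refine (Finset.sum_subset ?_ ?_).symm
    · intro m hm; simp only [Finset.mem_Icc] at *; omega
    · intro m hm hnm; simp only [Finset.mem_Icc] at *
      exact Nat.choose_eq_zero_of_lt (by omega)
  exact_mod_cast hnat

theorem stmt_4 (i j N : ℕ) (hi : 1 ≤ i) (hij : i ≤ j) (hN : 1 ≤ N) :
    ∑ t ∈ Finset.Icc 1 N,
        ((j : ℚ) - i) / t * Nat.choose t i * Nat.choose t j =
    ∑ l ∈ Finset.range i,
        ((j : ℚ) - i) / i * Nat.choose (j - 1) (i - l - 1) *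
          Nat.choose (l + j) l * Nat.choose (N + 1) (l + j + 1) := by
  have hrhs : ∀ l ∈ Finset.range i,
      ((j : ℚ) - i) / i * Nat.choose (j - 1) (i - l - 1) *
          Nat.choose (l + j) l * Nat.choose (N + 1) (l + j + 1) =
      ∑ t ∈ Finset.Icc 1 N,
        ((j : ℚ) - i) / i * Nat.choose (j - 1) (i - l - 1) *
          Nat.choose (l + j) l * Nat.choose t (l + j) := by
    intro l _
    rw [← stmt4_hock N (l + j) (by omega), Finset.mul_sum]
  rw [Finset.sum_congr rfl hrhs, Finset.sum_comm]
  refine Finset.sum_congr rfl fun t ht => ?_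
  simp only [Finset.mem_Icc] at ht
  have hi0 : (i : ℚ) ≠ 0 := by positivity
  have ht0 : (t : ℚ) ≠ 0 := by
    have : 1 ≤ t := ht.1
    positivity
  have hqn : t * (t - 1).choose (i - 1) = t.choose i * i := by
    obtain ⟨t', rfl⟩ := Nat.exists_eq_succ_of_ne_zero (by omega : t ≠ 0)
    obtain ⟨i', rfl⟩ := Nat.exists_eq_succ_of_ne_zero (by omega : i ≠ 0)
    simpa using Nat.add_one_mul_choose_eq t' i'
  have hq : (t : ℚ) * ((t - 1).choose (i - 1) : ℚ) = (t.choose i : ℚ) * i := by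
    exact_mod_cast hqn
  have hkeyQ : ((t - 1).choose (i - 1) : ℚ) * (t.choose j : ℚ) =
      ∑ l ∈ Finset.range i,
        ((j - 1).choose (i - l - 1) : ℚ) * (((l + j).choose l : ℚ) * (t.choose (l + j) : ℚ)) := by
    exact_mod_cast stmt4_key i j t hi hij
  calc ((j : ℚ) - i) / t * Nat.choose t i * Nat.choose t j
      = ((j : ℚ) - i) / i * (((t - 1).choose (i - 1) : ℚ) * (t.choose j : ℚ)) := by
        field_simp
        linear_combination (-(((j : ℚ) - i) * (t.choose j : ℚ))) * hq
    _ = ∑ l ∈ Finset.range i,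
        ((j : ℚ) - i) / i * Nat.choose (j - 1) (i - l - 1) *
          Nat.choose (l + j) l * Nat.choose t (l + j) := by
        rw [hkeyQ, Finset.mul_sum]
        exact Finset.sum_congr rfl fun l _ => by ring
end

section
/- For positive integers $n, s$ with $s \le n$, and positive integer $j$, $\sum_{i=1}^{2n-2s-1} \frac{(-1)^i}{2^{2n-2s-i-1}} \left( \sum_{t=1}^{2n-2s-1} \binom{t}{i}\binom{t-1}{j-1} - \sum_{t=1}^{2n-2s-1}\binom{t-1}{i-1}\binom{t}{j} \right) = 0$. -/
open Finset

lemma Hsum (t N : ℕ) (ht : t ≤ N) : ∑ i ∈ range (N+1), (-2:ℚ)^i * t.choose i = (-1)^t := by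
  have h1 : ∑ i ∈ range (N+1), (-2:ℚ)^i * t.choose i
      = ∑ i ∈ range (t+1), (-2:ℚ)^i * t.choose i := by
    apply (Finset.sum_subset ?_ ?_).symm
    · intro x hx; simp at *; omega
    · intro x hx hx2
      simp only [mem_range, not_lt] at hx hx2
      rw [Nat.choose_eq_zero_of_lt (by omega)]; simp
  rw [h1]
  have h2 := add_pow (-2:ℚ) 1 t
  norm_num at h2
  rw [← h2]

lemma icc_to_range (m : ℕ) (f : ℕ → ℚ) :
    ∑ i ∈ Icc 1 m, f i = ∑ i ∈ range m, f (i+1) := by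
  rw [← Finset.Ico_add_one_right_eq_Icc, Finset.sum_Ico_eq_sum_range]
  apply sum_congr (by norm_num)
  intro i _; rw [add_comm 1 i]

lemma key (k j : ℕ) (hj : 1 ≤ j) :
    ∑ i ∈ Icc 1 (2*k+1), ((-1:ℚ))^i / 2^(2*k+1-i) *
      ((∑ t ∈ Icc 1 (2*k+1), ((t.choose i : ℚ) * ((t-1).choose (j-1) : ℚ))) -
        ∑ t ∈ Icc 1 (2*k+1), (((t-1).choose (i-1) : ℚ) * (t.choose j : ℚ))) = 0 := by
  obtain ⟨j', rfl⟩ : ∃ j', j = j' + 1 := ⟨j - 1, by omega⟩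
  set m := 2*k+1 with hm
  simp only [Nat.add_sub_cancel]
  -- F
  have hFt : ∀ t ∈ Icc 1 m, (∑ i ∈ Icc 1 m, (-2:ℚ)^i * t.choose i) = (-1)^t - 1 := by
    intro t htm
    simp only [mem_Icc] at htm
    have h0 := Hsum t m (by omega)
    rw [Finset.sum_range_succ'] at h0
    norm_num at h0
    rw [icc_to_range]
    linarith [h0]
  -- G
  have hGt : ∀ t ∈ Icc 1 m, (∑ i ∈ Icc 1 m, (-2:ℚ)^i * (t-1).choose (i-1)) = 2 * (-1)^t := by
    intro t htm
    simp only [mem_Icc] at htm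
    rw [icc_to_range]
    have h0 := Hsum (t-1) (2*k) (by omega)
    rw [show 2*k+1 = m from rfl] at h0
    calc ∑ i ∈ range m, (-2:ℚ)^(i+1) * (t-1).choose (i+1-1)
        = ∑ i ∈ range m, (-2) * ((-2:ℚ)^i * (t-1).choose i) := by
          apply sum_congr rfl; intro i _
          rw [show i+1-1 = i by omega, pow_succ]; ring
      _ = (-2) * ((-1:ℚ))^(t-1) := by rw [← Finset.mul_sum, h0]
      _ = 2 * (-1)^t := by
          have : (-1:ℚ)^t = (-1)^(t-1) * (-1)^1 := by
            rw [← pow_add, show t-1+1 = t by omega]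
          rw [this]; ring
  -- T
  have hT : ∀ K : ℕ, ∑ t ∈ Icc 1 (2*K+1),
      (((-1:ℚ)^t - 1) * ((t-1).choose j') - 2*(-1)^t * (t.choose (j'+1))) = 0 := by
    intro K
    induction K with
    | zero =>
      rw [show 2*0+1 = 1 from rfl, Finset.Icc_self, Finset.sum_singleton]
      rw [show (1:ℕ)-1 = 0 from rfl, Nat.choose_succ_succ 0 j', Nat.choose_zero_succ]
      push_cast; ring
    | succ K ih =>
      rw [show 2*(K+1)+1 = (2*K+1) + 1 + 1 by ring,
        Finset.sum_Icc_succ_top (by omega), Finset.sum_Icc_succ_top (by omega), ih]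
      have e1 : (-1:ℚ)^(2*K+1+1) = 1 := by
        rw [show 2*K+1+1 = 2*(K+1) by ring, pow_mul]; norm_num
      have e2 : (-1:ℚ)^(2*K+1+1+1) = -1 := by
        rw [pow_succ, e1]; norm_num
      rw [e1, e2]
      rw [show 2*K+1+1-1 = 2*K+1 by omega, show 2*K+1+1+1-1 = 2*K+1+1 by omega]
      rw [show Nat.choose (2*K+1+1+1) (j'+1) = Nat.choose (2*K+1+1) j' + Nat.choose (2*K+1+1) (j'+1) from Nat.choose_succ_succ _ _]
      push_cast
      ring
  -- main chain
  calc ∑ i ∈ Icc 1 m, ((-1:ℚ))^i / 2^(m-i) *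
      ((∑ t ∈ Icc 1 m, ((t.choose i : ℚ) * ((t-1).choose j' : ℚ))) -
        ∑ t ∈ Icc 1 m, (((t-1).choose (i-1) : ℚ) * (t.choose (j'+1) : ℚ)))
      = ∑ i ∈ Icc 1 m, (1/2^m) * ((-2:ℚ)^i *
        ((∑ t ∈ Icc 1 m, ((t.choose i : ℚ) * ((t-1).choose j' : ℚ))) -
          ∑ t ∈ Icc 1 m, (((t-1).choose (i-1) : ℚ) * (t.choose (j'+1) : ℚ)))) := by
        apply sum_congr rfl
        intro i hi
        simp only [mem_Icc] at hi
        have h2 : ((-1:ℚ))^i / 2^(m-i) = (1/2^m) * (-2)^i := by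
          rw [show ((-2:ℚ))^i = (-1)^i * 2^i by rw [← mul_pow]; norm_num]
          rw [div_eq_iff (by positivity)]
          rw [show (1:ℚ)/2^m * ((-1)^i * 2^i) * 2^(m-i) = (-1)^i * (2^i * 2^(m-i)) / 2^m by ring]
          rw [← pow_add, show i + (m-i) = m by omega]
          field_simp
        rw [h2, mul_assoc]
    _ = (1/2^m) * ∑ i ∈ Icc 1 m, ((-2:ℚ)^i *
        ((∑ t ∈ Icc 1 m, ((t.choose i : ℚ) * ((t-1).choose j' : ℚ))) -
          ∑ t ∈ Icc 1 m, (((t-1).choose (i-1) : ℚ) * (t.choose (j'+1) : ℚ)))) := by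
        rw [Finset.mul_sum]
    _ = (1/2^m) * ∑ i ∈ Icc 1 m,
        ((∑ t ∈ Icc 1 m, (-2:ℚ)^i * ((t.choose i : ℚ) * ((t-1).choose j' : ℚ))) -
          ∑ t ∈ Icc 1 m, (-2:ℚ)^i * (((t-1).choose (i-1) : ℚ) * (t.choose (j'+1) : ℚ))) := by
        congr 1
        apply sum_congr rfl
        intro i _
        rw [mul_sub, Finset.mul_sum, Finset.mul_sum]
    _ = (1/2^m) * ((∑ i ∈ Icc 1 m, ∑ t ∈ Icc 1 m, (-2:ℚ)^i * ((t.choose i : ℚ) * ((t-1).choose j' : ℚ))) -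
          ∑ i ∈ Icc 1 m, ∑ t ∈ Icc 1 m, (-2:ℚ)^i * (((t-1).choose (i-1) : ℚ) * (t.choose (j'+1) : ℚ))) := by
        rw [Finset.sum_sub_distrib]
    _ = (1/2^m) * ((∑ t ∈ Icc 1 m, ∑ i ∈ Icc 1 m, (-2:ℚ)^i * ((t.choose i : ℚ) * ((t-1).choose j' : ℚ))) -
          ∑ t ∈ Icc 1 m, ∑ i ∈ Icc 1 m, (-2:ℚ)^i * (((t-1).choose (i-1) : ℚ) * (t.choose (j'+1) : ℚ))) := by
        have c1 : ∑ i ∈ Icc 1 m, ∑ t ∈ Icc 1 m, (-2:ℚ)^i * ((t.choose i : ℚ) * ((t-1).choose j' : ℚ))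
            = ∑ t ∈ Icc 1 m, ∑ i ∈ Icc 1 m, (-2:ℚ)^i * ((t.choose i : ℚ) * ((t-1).choose j' : ℚ)) :=
          Finset.sum_comm
        have c2 : ∑ i ∈ Icc 1 m, ∑ t ∈ Icc 1 m, (-2:ℚ)^i * (((t-1).choose (i-1) : ℚ) * (t.choose (j'+1) : ℚ))
            = ∑ t ∈ Icc 1 m, ∑ i ∈ Icc 1 m, (-2:ℚ)^i * (((t-1).choose (i-1) : ℚ) * (t.choose (j'+1) : ℚ)) :=
          Finset.sum_comm
        rw [c1, c2]
    _ = (1/2^m) * ∑ t ∈ Icc 1 m,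
        ((∑ i ∈ Icc 1 m, (-2:ℚ)^i * ((t.choose i : ℚ) * ((t-1).choose j' : ℚ))) -
          ∑ i ∈ Icc 1 m, (-2:ℚ)^i * (((t-1).choose (i-1) : ℚ) * (t.choose (j'+1) : ℚ))) := by
        rw [Finset.sum_sub_distrib]
    _ = (1/2^m) * ∑ t ∈ Icc 1 m,
        (((-1:ℚ)^t - 1) * ((t-1).choose j') - 2*(-1)^t * (t.choose (j'+1))) := by
        congr 1
        apply sum_congr rfl
        intro t ht
        have e1 : ∑ i ∈ Icc 1 m, (-2:ℚ)^i * ((t.choose i : ℚ) * ((t-1).choose j' : ℚ))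
            = (∑ i ∈ Icc 1 m, (-2:ℚ)^i * (t.choose i : ℚ)) * ((t-1).choose j' : ℚ) := by
          rw [Finset.sum_mul]; apply sum_congr rfl; intro i _; ring
        have e2 : ∑ i ∈ Icc 1 m, (-2:ℚ)^i * (((t-1).choose (i-1) : ℚ) * (t.choose (j'+1) : ℚ))
            = (∑ i ∈ Icc 1 m, (-2:ℚ)^i * ((t-1).choose (i-1) : ℚ)) * (t.choose (j'+1) : ℚ) := by
          rw [Finset.sum_mul]; apply sum_congr rfl; intro i _; ring
        rw [e1, e2, hFt t ht, hGt t ht]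
    _ = 0 := by rw [hT k, mul_zero]

theorem stmt_7 (n s j : ℕ) (hs : 1 ≤ s) (hsn : s ≤ n) (hj : 1 ≤ j) :
    ∑ i ∈ Finset.Icc 1 (2 * n - 2 * s - 1),
        ((-1 : ℚ)) ^ i / 2 ^ (2 * n - 2 * s - i - 1) *
          ((∑ t ∈ Finset.Icc 1 (2 * n - 2 * s - 1),
              (Nat.choose t i * Nat.choose (t - 1) (j - 1) : ℚ)) -
            ∑ t ∈ Finset.Icc 1 (2 * n - 2 * s - 1),
              (Nat.choose (t - 1) (i - 1) * Nat.choose t j : ℚ)) = 0 := by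
  rcases eq_or_lt_of_le hsn with h | h
  · rw [show 2*n - 2*s - 1 = 0 by omega]
    simp
  · have hm : 2 * n - 2 * s - 1 = 2 * (n - s - 1) + 1 := by omega
    rw [hm]
    calc ∑ i ∈ Finset.Icc 1 (2*(n-s-1)+1),
        ((-1 : ℚ)) ^ i / 2 ^ (2 * n - 2 * s - i - 1) *
          ((∑ t ∈ Finset.Icc 1 (2*(n-s-1)+1),
              (Nat.choose t i * Nat.choose (t - 1) (j - 1) : ℚ)) -
            ∑ t ∈ Finset.Icc 1 (2*(n-s-1)+1),
              (Nat.choose (t - 1) (i - 1) * Nat.choose t j : ℚ))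
        = ∑ i ∈ Finset.Icc 1 (2*(n-s-1)+1),
        ((-1 : ℚ)) ^ i / 2 ^ (2*(n-s-1)+1 - i) *
          ((∑ t ∈ Finset.Icc 1 (2*(n-s-1)+1),
              (Nat.choose t i * Nat.choose (t - 1) (j - 1) : ℚ)) -
            ∑ t ∈ Finset.Icc 1 (2*(n-s-1)+1),
              (Nat.choose (t - 1) (i - 1) * Nat.choose t j : ℚ)) := by
          apply Finset.sum_congr rfl
          intro i _
          rw [show 2 * n - 2 * s - i - 1 = 2*(n-s-1)+1 - i by omega]
      _ = 0 := key (n - s - 1) j hj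
end

section
/- (Gauss's second summation theorem, terminating case) For every nonnegative integer $N$ and real number $a$ such that no denominator vanishes: $\sum_{m=0}^{N} \frac{(a)_m (-N)_m}{m! \left(\frac{1}{2}+\frac{a}{2}-\frac{N}{2}\right)_m} \left(\frac{1}{2}\right)^m$ equals $0$ if $N$ is odd, and equals $\frac{(1/2)_{N/2}}{(1/2 - a/2)_{N/2}}$ if $N$ is even. -/
/-- The Pochhammer symbol `(a)_m = a (a+1) ⋯ (a+m-1)`. -/
noncomputable def poch (a : ℝ) (m : ℕ) : ℝ := ∏ i ∈ Finset.range m, (a + i)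

lemma poch_zero (x : ℝ) : poch x 0 = 1 := by simp [poch]

lemma poch_succ (x : ℝ) (m : ℕ) : poch x (m + 1) = poch x m * (x + m) := by
  simp [poch, Finset.prod_range_succ]

lemma poch_succ' (x : ℝ) (m : ℕ) : poch x (m + 1) = x * poch (x + 1) m := by
  rw [poch, poch, Finset.prod_range_succ']
  simp only [Nat.cast_zero, add_zero]
  rw [mul_comm]
  congr 1
  apply Finset.prod_congr rfl
  intro i _
  push_cast
  ring

lemma poch_nat_zero (n m : ℕ) (h : n < m) : poch (-(n : ℝ)) m = 0 := by
  apply Finset.prod_eq_zero (Finset.mem_range.mpr h)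
  simp

lemma poch_shift2 (x : ℝ) (m : ℕ) :
    poch (x + 2) m * (x * (x + 1)) = poch x m * ((x + m) * (x + m + 1)) := by
  have h1 : poch x (m + 2) = poch x m * ((x + m) * (x + m + 1)) := by
    rw [poch_succ, poch_succ]
    push_cast; ring
  have h2 : poch x (m + 2) = x * (x + 1) * poch (x + 2) m := by
    rw [poch_succ', poch_succ']
    have : x + 1 + 1 = x + 2 := by ring
    rw [this]; ring
  rw [← h1, h2]; ring

lemma poch_factor_ne (x : ℝ) (m : ℕ) (h : poch x m ≠ 0) :
    ∀ i : ℕ, i < m → x + i ≠ 0 := by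
  intro i hi hzero
  exact h (Finset.prod_eq_zero (Finset.mem_range.mpr hi) hzero)

lemma poch_ne_of_factors (x : ℝ) (m : ℕ) (h : ∀ i : ℕ, i < m → x + i ≠ 0) :
    poch x m ≠ 0 := by
  rw [poch]
  exact Finset.prod_ne_zero_iff.mpr fun i hi => h i (Finset.mem_range.mp hi)

lemma rec_step (N : ℕ) (a : ℝ)
    (hden : ∀ m : ℕ, m ≤ N + 2 → poch (1 / 2 + a / 2 - ((N : ℝ) + 2) / 2) m ≠ 0) :
    ((N : ℝ) + 1 - a) * ∑ m ∈ Finset.range (N + 3),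
        poch a m * poch (-((N : ℝ) + 2)) m /
          ((m.factorial : ℝ) * poch (1 / 2 + a / 2 - ((N : ℝ) + 2) / 2) m) * (1 / 2) ^ m
    = ((N : ℝ) + 1) * ∑ m ∈ Finset.range (N + 1),
        poch a m * poch (-(N : ℝ)) m /
          ((m.factorial : ℝ) * poch (1 / 2 + a / 2 - (N : ℝ) / 2) m) * (1 / 2) ^ m := by
  set c : ℝ := 1 / 2 + a / 2 - ((N : ℝ) + 2) / 2 with hc
  have hcN : (1 / 2 + a / 2 - (N : ℝ) / 2) = c + 1 := by rw [hc]; ring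
  rw [hcN]
  set t : ℕ → ℝ := fun m => poch a m * poch (-((N : ℝ) + 2)) m /
      ((m.factorial : ℝ) * poch c m) * (1 / 2) ^ m with ht
  set s : ℕ → ℝ := fun m => poch a m * poch (-(N : ℝ)) m /
      ((m.factorial : ℝ) * poch (c + 1) m) * (1 / 2) ^ m with hs
  have h1 : s (N + 1) = 0 := by
    simp only [hs, poch_nat_zero N (N + 1) (by omega)]
    ring
  have h2 : s (N + 1 + 1) = 0 := by
    simp only [hs, poch_nat_zero N (N + 1 + 1) (by omega)]
    ring
  have hext : ∑ m ∈ Finset.range (N + 3), s m = ∑ m ∈ Finset.range (N + 1), s m := by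
    rw [show N + 3 = N + 1 + 1 + 1 from rfl]
    rw [Finset.sum_range_succ s (N + 1 + 1), Finset.sum_range_succ s (N + 1), h1, h2]
    ring
  rw [← hext, Finset.mul_sum, Finset.mul_sum, ← sub_eq_zero, ← Finset.sum_sub_distrib]
  set g : ℕ → ℝ := fun m =>
      -(((N : ℝ) + 1 - a) / ((N : ℝ) + 2)) * m * t m with hg
  have key : ∀ m ∈ Finset.range (N + 3),
      ((N : ℝ) + 1 - a) * t m - ((N : ℝ) + 1) * s m = g (m + 1) - g m := by
    intro m hm
    rw [Finset.mem_range] at hm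
    have hN2 : (N : ℝ) + 2 ≠ 0 := by positivity
    by_cases hcase : m ≤ N + 1
    · -- main case
      have hC0 : poch c m ≠ 0 := hden m (by omega)
      have hsucc : poch c (m + 1) ≠ 0 := hden (m + 1) (by omega)
      have hcm : c + m ≠ 0 := by
        rw [poch_succ] at hsucc
        exact (mul_ne_zero_iff.mp hsucc).2
      have hc0 : c ≠ 0 := by
        have := hden 1 (by omega)
        simpa [poch] using this
      have hfac : (m.factorial : ℝ) ≠ 0 := Nat.cast_ne_zero.mpr m.factorial_ne_zero
      have hm1 : (m : ℝ) + 1 ≠ 0 := by positivity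
      have hN1 : (N : ℝ) + 1 ≠ 0 := by positivity
      have hBold : poch (-(N : ℝ)) m * (((N : ℝ) + 2) * ((N : ℝ) + 1)) =
          poch (-((N : ℝ) + 2)) m *
            (((m : ℝ) - ((N : ℝ) + 2)) * ((m : ℝ) - ((N : ℝ) + 1))) := by
        have h := poch_shift2 (-((N : ℝ) + 2)) m
        rw [show -((N : ℝ) + 2) + 2 = -(N : ℝ) by ring] at h
        linear_combination h
      have hCold : c * poch (c + 1) m = poch c m * (c + m) := by
        rw [← poch_succ', poch_succ]
      simp only [hg, ht, hs]
      rw [poch_succ a m, poch_succ (-((N : ℝ) + 2)) m, poch_succ c m]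
      set A := poch a m with hA
      set B := poch (-((N : ℝ) + 2)) m with hB
      set C := poch c m with hC
      set D := poch (-(N : ℝ)) m with hDD
      set E := poch (c + 1) m with hE
      have hD : D = B * (((m : ℝ) - ((N : ℝ) + 2)) * ((m : ℝ) - ((N : ℝ) + 1))) /
          (((N : ℝ) + 2) * ((N : ℝ) + 1)) := by
        rw [eq_div_iff (by positivity)]
        linear_combination hBold
      have hE2 : E = C * (c + m) / c := by
        rw [eq_div_iff hc0]
        linear_combination hCold
      rw [hD, hE2]
      push_cast [Nat.factorial_succ]
      field_simp
      ring
    · -- boundary case m = N + 2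
      have hmeq : m = N + 2 := by omega
      subst hmeq
      have hs0 : s (N + 2) = 0 := by
        simp only [hs, poch_nat_zero N (N + 2) (by omega)]
        ring
      have hg0 : g (N + 2 + 1) = 0 := by
        simp only [hg, ht]
        have hz : poch (-((N : ℝ) + 2)) (N + 2 + 1) = 0 := by
          rw [show -((N : ℝ) + 2) = -(((N + 2 : ℕ) : ℝ)) by push_cast; ring]
          exact poch_nat_zero (N + 2) (N + 2 + 1) (by omega)
        rw [hz]
        ring
      rw [hs0, hg0]
      simp only [hg]
      push_cast
      field_simp
      ring
  rw [Finset.sum_congr rfl key, Finset.sum_range_sub g]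
  have hgN : g (N + 3) = 0 := by
    simp only [hg, ht]
    have hz : poch (-((N : ℝ) + 2)) (N + 3) = 0 := by
      rw [show -((N : ℝ) + 2) = -(((N + 2 : ℕ) : ℝ)) by push_cast; ring]
      exact poch_nat_zero (N + 2) (N + 3) (by omega)
    rw [hz]
    ring
  have hg0 : g 0 = 0 := by simp [hg]
  rw [hgN, hg0]
  ring

theorem stmt_9 (N : ℕ) (a : ℝ)
    (hden : ∀ m : ℕ, m ≤ N → poch (1 / 2 + a / 2 - (N : ℝ) / 2) m ≠ 0) :
    (Odd N →
      ∑ m ∈ Finset.range (N + 1),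
          poch a m * poch (-(N : ℝ)) m /
            ((m.factorial : ℝ) * poch (1 / 2 + a / 2 - (N : ℝ) / 2) m) *
            (1 / 2) ^ m = 0) ∧
    (Even N →
      ∑ m ∈ Finset.range (N + 1),
          poch a m * poch (-(N : ℝ)) m /
            ((m.factorial : ℝ) * poch (1 / 2 + a / 2 - (N : ℝ) / 2) m) *
            (1 / 2) ^ m =
        poch (1 / 2) (N / 2) / poch (1 / 2 - a / 2) (N / 2)) := by
  induction N using Nat.strong_induction_on with
  | _ N ih =>
  match N, hden, ih with
  | 0, hden, ih =>
    constructor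
    · intro h; exact absurd h (by simp)
    · intro _
      norm_num [poch]
  | 1, hden, ih =>
    constructor
    · intro _
      have ha := hden 1 le_rfl
      have e1 : ∀ x : ℝ, poch x 1 = x := by intro x; simp [poch]
      rw [e1] at ha
      push_cast at ha
      have ha' : a ≠ 0 := by
        intro h
        apply ha
        rw [h]
        ring
      rw [Finset.sum_range_succ, Finset.sum_range_one]
      simp only [poch_zero, e1]
      push_cast
      norm_num [Nat.factorial]
      field_simp
      norm_num
    · intro h; exact absurd h (by simp)
  | (M + 2), hden, ih =>
    have hc0 : (1 / 2 + a / 2 - ((M : ℝ) + 2) / 2) ≠ 0 := by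
      have h := hden 1 (by omega)
      push_cast at h
      simpa [poch] using h
    have hdenM : ∀ m : ℕ, m ≤ M → poch (1 / 2 + a / 2 - (M : ℝ) / 2) m ≠ 0 := by
      intro m hm
      have h1 : poch (1 / 2 + a / 2 - ((M : ℝ) + 2) / 2) (m + 1) ≠ 0 := by
        have h := hden (m + 1) (by omega)
        push_cast at h
        exact h
      rw [poch_succ'] at h1
      have h2 := (mul_ne_zero_iff.mp h1).2
      rwa [show (1 / 2 + a / 2 - ((M : ℝ) + 2) / 2) + 1 = 1 / 2 + a / 2 - (M : ℝ) / 2 by ring]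
        at h2
    have hden2 : ∀ m : ℕ, m ≤ M + 2 →
        poch (1 / 2 + a / 2 - ((M : ℝ) + 2) / 2) m ≠ 0 := by
      intro m hm
      have h := hden m hm
      push_cast at h
      exact h
    have hNa : (M : ℝ) + 1 - a ≠ 0 := by
      intro h
      apply hc0
      linarith
    have hrec := rec_step M a hden2
    have IH := ih M (by omega) hdenM
    have hsum2 : ∑ m ∈ Finset.range (M + 2 + 1),
        poch a m * poch (-((M + 2 : ℕ) : ℝ)) m /
          ((m.factorial : ℝ) * poch (1 / 2 + a / 2 - ((M + 2 : ℕ) : ℝ) / 2) m) *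
          (1 / 2) ^ m
        = ∑ m ∈ Finset.range (M + 3),
        poch a m * poch (-((M : ℝ) + 2)) m /
          ((m.factorial : ℝ) * poch (1 / 2 + a / 2 - ((M : ℝ) + 2) / 2) m) *
          (1 / 2) ^ m := by
      apply Finset.sum_congr (by norm_num)
      intro m _
      push_cast
      ring_nf
    constructor
    · intro hodd
      have hoddM : Odd M := by
        rcases hodd with ⟨k, hk⟩
        exact ⟨k - 1, by omega⟩
      have h0 := IH.1 hoddM
      rw [hsum2]
      rw [h0, mul_zero] at hrec
      exact (mul_eq_zero.mp hrec).resolve_left hNa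
    · intro heven
      obtain ⟨K, hK⟩ := heven
      have hKpos : 1 ≤ K := by omega
      set L : ℕ := K - 1 with hL
      have hMval : M = L + L := by omega
      have hevenM : Even M := ⟨L, hMval⟩
      have hIH := IH.2 hevenM
      have hdiv1 : M / 2 = L := by omega
      have hdiv2 : (M + 2) / 2 = L + 1 := by omega
      rw [hdiv1] at hIH
      rw [hsum2, hdiv2]
      have hqfac : ∀ i : ℕ, i ≤ L → (1 / 2 - a / 2 + (i : ℝ)) ≠ 0 := by
        intro i hi
        have hfull := hden (M + 2) le_rfl
        have hj := poch_factor_ne _ _ hfull (L - i) (by omega)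
        intro hzero
        apply hj
        push_cast [show ((M + 2 : ℕ) : ℝ) = 2 * (L : ℝ) + 2 by push_cast [hMval]; ring,
          Nat.cast_sub hi]
        linarith
      have hQ : poch (1 / 2 - a / 2) L ≠ 0 :=
        poch_ne_of_factors _ _ fun i hi => hqfac i (by omega)
      have hqL : (1 / 2 - a / 2 + (L : ℝ)) ≠ 0 := hqfac L le_rfl
      rw [poch_succ, poch_succ]
      rw [hIH] at hrec
      rw [eq_div_iff (mul_ne_zero hQ hqL)]
      have hrec2 : ((M : ℝ) + 1 - a) * (∑ m ∈ Finset.range (M + 3),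
          poch a m * poch (-((M : ℝ) + 2)) m /
            ((m.factorial : ℝ) * poch (1 / 2 + a / 2 - ((M : ℝ) + 2) / 2) m) *
            (1 / 2) ^ m) * poch (1 / 2 - a / 2) L
          = ((M : ℝ) + 1) * poch (1 / 2) L := by
        rw [hrec, mul_assoc, div_mul_cancel₀ _ hQ]
      have hMr : (M : ℝ) = 2 * (L : ℝ) := by push_cast [hMval]; ring
      apply mul_right_cancel₀ hNa
      rw [hMr] at hrec2 ⊢
      linear_combination (1 / 2 - a / 2 + (L : ℝ)) * hrec2
end

section
/- Let $k$ be a fixed nonnegative integer and let $\beta$ be a nonzero real number. Then $\int_0^1 \frac{(1-\alpha)^{4k+2}}{(1+\alpha/\beta)\sqrt{\alpha(2-\alpha)}}\,d\alpha$ is asymptotic to $\sqrt{\pi/(8k)}$ as $k \to \infty$; that is, the ratio of the integral to $\sqrt{\pi/(8k)}$ tends to $1$. (Assume $\beta > 0$ or $\beta < -1$ so that the integrand has no singularity on $[0,1]$.) -/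
open Real MeasureTheory Filter Set intervalIntegral

namespace Stmt15Aux

/-- The partial product appearing in `∫ sin^{2m}`. -/
noncomputable def P (m : ℕ) : ℝ := ∏ i ∈ Finset.range m, (2*(i:ℝ)+1)/(2*i+2)

lemma P_pos (m : ℕ) : 0 < P m := by
  refine Finset.prod_pos fun i _ => div_pos (by positivity) (by positivity)

lemma P_succ (m : ℕ) : P (m+1) = P m * ((2*(m:ℝ)+1)/(2*m+2)) := Finset.prod_range_succ _ _

lemma cos_int (m : ℕ) : ∫ x in (0:ℝ)..(π/2), cos x ^ (2*m) = (π/2) * P m := by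
  induction m with
  | zero => simp [P]
  | succ m ih =>
    have h : 2 * (m+1) = 2*m + 2 := by ring
    rw [h, integral_cos_pow, ih, P_succ]
    rw [Real.cos_pi_div_two, Real.sin_zero]
    rw [zero_pow (by omega : 2*m+1 ≠ 0)]
    push_cast
    ring

lemma WP (m : ℕ) : Real.Wallis.W m * P m ^ 2 * (2*(m:ℝ)+1) = 1 := by
  induction m with
  | zero => simp [Real.Wallis.W, P]
  | succ m ih =>
    have h1 : (2*(m:ℝ)+1) ≠ 0 := by positivity
    have h2 : (2*(m:ℝ)+2) ≠ 0 := by positivity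
    have h3 : (2*(m:ℝ)+3) ≠ 0 := by positivity
    have step : Real.Wallis.W (m+1) * P (m+1)^2 * (2*((m:ℝ)+1)+1) =
        Real.Wallis.W m * P m^2 * (2*(m:ℝ)+1) := by
      rw [Real.Wallis.W_succ, P_succ]
      field_simp
      ring
    push_cast
    rw [step, ih]

lemma hden (β : ℝ) (hβ : 0 < β ∨ β < -1) {t : ℝ} (h0 : 0 ≤ t) (h1 : t ≤ 1) :
    0 < 1 + t / β := by
  rcases hβ with hb | hb
  · positivity
  · have hβ0 : β < 0 := by linarith
    have he : 1 + t / β = (β + t) / β := by field_simp [hβ0.ne]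
    rw [he]
    apply div_pos_iff.2
    right
    constructor <;> linarith

lemma g_cont (β : ℝ) (hβ : 0 < β ∨ β < -1) :
    ContinuousOn (fun θ : ℝ => (1 + (1 - Real.cos θ) / β)⁻¹) (Icc 0 (π/2)) := by
  apply ContinuousOn.inv₀
  · exact (continuousOn_const.add ((continuousOn_const.sub
      Real.continuous_cos.continuousOn).div_const β))
  · intro θ hθ
    have hc0 : 0 ≤ Real.cos θ := Real.cos_nonneg_of_mem_Icc
      ⟨by linarith [hθ.1, Real.pi_pos], hθ.2⟩
    have hc1 : Real.cos θ ≤ 1 := Real.cos_le_one θ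
    exact (hden β hβ (by linarith) (by linarith)).ne'

lemma subst (β : ℝ) (hβ : 0 < β ∨ β < -1) (n : ℕ) :
    (∫ α in (0:ℝ)..1, (1 - α) ^ n / ((1 + α / β) * Real.sqrt (α * (2 - α))))
      = ∫ θ in Icc (0:ℝ) (π/2), Real.cos θ ^ n • (1 + (1 - Real.cos θ) / β)⁻¹ := by
  have hpi := Real.pi_pos
  have himg : (fun θ : ℝ => 1 - Real.cos θ) '' Ioo 0 (π/2) = Ioo (0:ℝ) 1 := by
    ext α
    constructor
    · rintro ⟨θ, ⟨h0, h1⟩, rfl⟩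
      have hlt : Real.cos θ < 1 := by
        have := Real.strictAntiOn_cos (a := 0) (b := θ)
          ⟨le_rfl, hpi.le⟩ ⟨h0.le, by linarith⟩ h0
        simpa using this
      have hgt : 0 < Real.cos θ := Real.cos_pos_of_mem_Ioo ⟨by linarith, h1⟩
      show (0:ℝ) < 1 - Real.cos θ ∧ 1 - Real.cos θ < 1
      exact ⟨by linarith, by linarith⟩
    · rintro ⟨h0, h1⟩
      refine ⟨Real.arccos (1 - α), ⟨?_, ?_⟩, ?_⟩
      · exact Real.arccos_pos.2 (by linarith)
      · exact Real.arccos_lt_pi_div_two.2 (by linarith)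
      · show 1 - Real.cos (Real.arccos (1 - α)) = α
        rw [Real.cos_arccos (by linarith) (by linarith)]
        ring
  have hderiv : ∀ θ ∈ Ioo (0:ℝ) (π/2), HasDerivWithinAt (fun θ : ℝ => 1 - Real.cos θ)
      (Real.sin θ) (Ioo (0:ℝ) (π/2)) θ := fun θ _ => by
    simpa using ((Real.hasDerivAt_cos θ).const_sub 1).hasDerivWithinAt
  have hinj : InjOn (fun θ : ℝ => 1 - Real.cos θ) (Ioo 0 (π/2)) := by
    intro a ha b hb hab
    have hcab : Real.cos a = Real.cos b := by
      have : 1 - Real.cos a = 1 - Real.cos b := hab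
      linarith
    exact Real.injOn_cos ⟨ha.1.le, by linarith [ha.2]⟩ ⟨hb.1.le, by linarith [hb.2]⟩ hcab
  have hcv := MeasureTheory.integral_image_eq_integral_abs_deriv_smul measurableSet_Ioo
    hderiv hinj (fun α => (1 - α) ^ n / ((1 + α / β) * Real.sqrt (α * (2 - α))))
  rw [himg] at hcv
  rw [intervalIntegral.integral_of_le (by norm_num : (0:ℝ) ≤ 1),
    MeasureTheory.integral_Ioc_eq_integral_Ioo, hcv,
    MeasureTheory.integral_Icc_eq_integral_Ioc, MeasureTheory.integral_Ioc_eq_integral_Ioo]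
  apply MeasureTheory.setIntegral_congr_fun measurableSet_Ioo
  intro θ hθ
  have hs : 0 < Real.sin θ := Real.sin_pos_of_pos_of_lt_pi hθ.1 (by linarith [hθ.2])
  have hc0 : 0 ≤ Real.cos θ := Real.cos_nonneg_of_mem_Icc ⟨by linarith [hθ.1], hθ.2.le⟩
  have hc1 : Real.cos θ ≤ 1 := Real.cos_le_one θ
  have hd : 0 < 1 + (1 - Real.cos θ) / β := hden β hβ (by linarith) (by linarith)
  have hsq : (1 - Real.cos θ) * (2 - (1 - Real.cos θ)) = Real.sin θ ^ 2 := by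
    have := Real.sin_sq_add_cos_sq θ
    nlinarith
  simp only [smul_eq_mul]
  rw [show (1 : ℝ) - (1 - Real.cos θ) = Real.cos θ by ring, hsq, Real.sqrt_sq hs.le,
    abs_of_pos hs]
  field_simp

lemma Dval (m : ℕ) : ∫ θ in Icc (0:ℝ) (π/2), Real.cos θ ^ (2*m) = (π/2) * P m := by
  rw [MeasureTheory.integral_Icc_eq_integral_Ioc,
    ← intervalIntegral.integral_of_le (by positivity : (0:ℝ) ≤ π/2)]
  exact cos_int m

lemma peak (β : ℝ) (hβ : 0 < β ∨ β < -1) :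
    Filter.Tendsto (fun n : ℕ => (∫ θ in Icc (0:ℝ) (π/2), Real.cos θ ^ n)⁻¹ •
      ∫ θ in Icc (0:ℝ) (π/2), Real.cos θ ^ n • (1 + (1 - Real.cos θ) / β)⁻¹)
      Filter.atTop (nhds 1) := by
  have hpi := Real.pi_pos
  have h := tendsto_setIntegral_pow_smul_of_unique_maximum_of_isCompact_of_continuousOn
    (μ := MeasureTheory.volume) (s := Icc (0:ℝ) (π/2)) (x₀ := (0:ℝ))
    isCompact_Icc Real.continuous_cos.continuousOn
    (fun y hy hy0 => by
      have : Real.cos y < Real.cos 0 := Real.strictAntiOn_cos (a := 0) (b := y)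
        ⟨le_rfl, hpi.le⟩ ⟨hy.1, by linarith [hy.2]⟩ (lt_of_le_of_ne hy.1 (Ne.symm hy0))
      simpa using this)
    (fun x hx => Real.cos_nonneg_of_mem_Icc ⟨by linarith [hx.1], hx.2⟩)
    (by norm_num)
    (by
      rw [interior_Icc, closure_Ioo (by positivity : (0:ℝ) ≠ π/2)]
      exact ⟨le_rfl, by positivity⟩)
    (g_cont β hβ)
  simpa using h

lemma t_lim : Filter.Tendsto
    (fun k : ℕ => 2*π*(k:ℝ)/(Real.Wallis.W (2*k+1) * (4*(k:ℝ)+3)))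
    Filter.atTop (nhds 1) := by
  have hpi := Real.pi_pos
  have hW : Filter.Tendsto (fun k : ℕ => Real.Wallis.W (2*k+1)) Filter.atTop (nhds (π/2)) :=
    Real.Wallis.tendsto_W_nhds_pi_div_two.comp
      (Filter.tendsto_atTop_mono (fun k => (by omega : k ≤ 2*k+1)) Filter.tendsto_id)
  have hWinv : Filter.Tendsto (fun k : ℕ => (Real.Wallis.W (2*k+1))⁻¹)
      Filter.atTop (nhds (π/2)⁻¹) := hW.inv₀ (by positivity)
  have h3k : Filter.Tendsto (fun k : ℕ => 3/(k:ℝ)) Filter.atTop (nhds 0) :=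
    tendsto_const_div_atTop_nhds_zero_nat 3
  have hfrac : Filter.Tendsto (fun k : ℕ => 2*(k:ℝ)/(4*(k:ℝ)+3))
      Filter.atTop (nhds (1/2)) := by
    have h2 : Filter.Tendsto (fun k : ℕ => 2/(4 + 3/(k:ℝ)))
        Filter.atTop (nhds (2/(4+0))) :=
      Filter.Tendsto.div tendsto_const_nhds (tendsto_const_nhds.add h3k) (by norm_num)
    have h3 : (2:ℝ)/(4+0) = 1/2 := by norm_num
    rw [h3] at h2
    apply h2.congr'
    filter_upwards [Filter.eventually_ge_atTop 1] with k hk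
    have hk0 : (k:ℝ) ≠ 0 := by positivity
    field_simp
  have := (hfrac.mul hWinv).const_mul π
  have hval : π * (1/2 * (π/2)⁻¹) = 1 := by field_simp
  rw [hval] at this
  apply this.congr
  intro k
  have hW0 : Real.Wallis.W (2*k+1) ≠ 0 := (Real.Wallis.W_pos _).ne'
  have h43 : (4*(k:ℝ)+3) ≠ 0 := by positivity
  field_simp

lemma denom_ratio : Filter.Tendsto
    (fun k : ℕ => ((π/2) * P (2*k+1)) / Real.sqrt (π/(8*(k:ℝ))))
    Filter.atTop (nhds 1) := by
  have hpi := Real.pi_pos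
  have hsq : Filter.Tendsto
      (fun k : ℕ => Real.sqrt (2*π*(k:ℝ)/(Real.Wallis.W (2*k+1) * (4*(k:ℝ)+3))))
      Filter.atTop (nhds 1) := by
    have := (Real.continuous_sqrt.continuousAt (x := (1:ℝ))).tendsto.comp t_lim
    simpa [Function.comp_def] using this
  apply hsq.congr'
  filter_upwards [Filter.eventually_ge_atTop 1] with k hk
  have hk0 : (0:ℝ) < (k:ℝ) := by exact_mod_cast hk
  have hW0 : (0:ℝ) < Real.Wallis.W (2*k+1) := Real.Wallis.W_pos _
  have h43 : (0:ℝ) < (4*(k:ℝ)+3) := by positivity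
  have hP := P_pos (2*k+1)
  have hwp := WP (2*k+1)
  have hcast : (2*((2*k+1 : ℕ):ℝ)+1) = 4*(k:ℝ)+3 := by push_cast; ring
  rw [hcast] at hwp
  have hP2 : P (2*k+1)^2 = (Real.Wallis.W (2*k+1) * (4*(k:ℝ)+3))⁻¹ := by
    have h : (Real.Wallis.W (2*k+1) * (4*(k:ℝ)+3)) * P (2*k+1)^2 = 1 := by linarith [hwp]
    exact eq_inv_of_mul_eq_one_left (by linarith [h] : P (2*k+1)^2 * (Real.Wallis.W (2*k+1) * (4*(k:ℝ)+3)) = 1)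
  have harg : 2*π*(k:ℝ)/(Real.Wallis.W (2*k+1) * (4*(k:ℝ)+3))
      = ((π/2) * P (2*k+1))^2 / (π/(8*(k:ℝ))) := by
    rw [mul_pow, hP2]
    field_simp
    ring
  rw [harg, Real.sqrt_div (sq_nonneg _), Real.sqrt_sq (by positivity)]

end Stmt15Aux

theorem stmt_15 (β : ℝ) (hβ : 0 < β ∨ β < -1) :
    Filter.Tendsto
      (fun k : ℕ =>
        (∫ α in (0:ℝ)..1,
            (1 - α) ^ (4 * k + 2) / ((1 + α / β) * Real.sqrt (α * (2 - α)))) /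
          Real.sqrt (Real.pi / (8 * k)))
      Filter.atTop (nhds 1) := by
  have hpi := Real.pi_pos
  have hcomp : Filter.Tendsto (fun k : ℕ => 4*k+2) Filter.atTop Filter.atTop :=
    Filter.tendsto_atTop_mono (fun k => (by omega : k ≤ 4*k+2)) Filter.tendsto_id
  have hA : Filter.Tendsto (fun k : ℕ =>
      (∫ θ in Set.Icc (0:ℝ) (π/2), Real.cos θ ^ (4*k+2))⁻¹ •
      ∫ θ in Set.Icc (0:ℝ) (π/2), Real.cos θ ^ (4*k+2) • (1 + (1 - Real.cos θ) / β)⁻¹)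
      Filter.atTop (nhds 1) := (Stmt15Aux.peak β hβ).comp hcomp
  have hD : ∀ k : ℕ, (∫ θ in Set.Icc (0:ℝ) (π/2), Real.cos θ ^ (4*k+2))
      = (π/2) * Stmt15Aux.P (2*k+1) := fun k => by
    rw [show 4*k+2 = 2*(2*k+1) by ring]
    exact Stmt15Aux.Dval (2*k+1)
  have hB : Filter.Tendsto (fun k : ℕ =>
      (∫ θ in Set.Icc (0:ℝ) (π/2), Real.cos θ ^ (4*k+2)) / Real.sqrt (π/(8*(k:ℝ))))
      Filter.atTop (nhds 1) := by
    apply Stmt15Aux.denom_ratio.congr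
    intro k
    rw [hD k]
  have hAB := hA.mul hB
  rw [mul_one] at hAB
  apply hAB.congr
  intro k
  have hD0 : (∫ θ in Set.Icc (0:ℝ) (π/2), Real.cos θ ^ (4*k+2)) ≠ 0 := by
    rw [hD k]
    exact (mul_pos (by positivity) (Stmt15Aux.P_pos _)).ne'
  rw [Stmt15Aux.subst β hβ (4*k+2)]
  set D := ∫ θ in Set.Icc (0:ℝ) (π/2), Real.cos θ ^ (4*k+2) with hDdef
  set J := ∫ θ in Set.Icc (0:ℝ) (π/2), Real.cos θ ^ (4*k+2) • (1 + (1 - Real.cos θ) / β)⁻¹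
  set s := Real.sqrt (π/(8*(k:ℝ)))
  show D⁻¹ • J * (D / s) = J / s
  rw [smul_eq_mul, div_eq_mul_inv, div_eq_mul_inv,
    show D⁻¹ * J * (D * s⁻¹) = (D⁻¹ * D) * (J * s⁻¹) by ring,
    inv_mul_cancel₀ hD0, one_mul]
end

section
/- Define $I_\beta(k) = \int_0^1 \frac{(1-\alpha)^{4k+2}}{(1+\alpha/\beta)\sqrt{\alpha(2-\alpha)}}\,d\alpha$ for $\beta > 0$ or $\beta < -1$. Then $I_\beta(k+1) - I_\beta(k) = \int_0^1 \frac{(1-\alpha)^{4k+2}}{(1+\alpha/\beta)\sqrt{\alpha(2-\alpha)}}\big[(1-\alpha)^4 - 1\big]\,d\alpha$, and this difference is asymptotic to $-\frac{\sqrt{\pi}}{4\sqrt{2}\,k^{3/2}}$ as $k \to \infty$. -/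
open MeasureTheory Real Set Filter intervalIntegral Topology

noncomputable def psiAux (β α : ℝ) : ℝ :=
  (4 - 6*α + 4*α^2 - α^3) / ((1 + α/β) * Real.sqrt (2 - α))

lemma denAux (β : ℝ) (hβ : 0 < β ∨ β < -1) :
    ∃ c : ℝ, 0 < c ∧ ∀ α ∈ Set.Icc (0:ℝ) 1, c ≤ 1 + α / β := by
  rcases hβ with h | h
  · exact ⟨1, one_pos, fun α hα => by
      have : 0 ≤ α / β := div_nonneg hα.1 h.le
      linarith⟩
  · refine ⟨1 + 1/β, ?_, fun α hα => ?_⟩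
    · have : 0 < (β + 1)/β := div_pos_of_neg_of_neg (by linarith) (by linarith)
      have hβ0 : β ≠ 0 := by linarith
      have : (β + 1)/β = 1 + 1/β := by field_simp
      linarith
    · have h1 : 0 ≤ (α - 1)/β := div_nonneg_of_nonpos (by linarith [hα.2]) (by linarith)
      have hβ0 : β ≠ 0 := by linarith
      have : (α - 1)/β = α/β - 1/β := by ring
      linarith

lemma psiAux_zero (β : ℝ) : psiAux β 0 = 2 * Real.sqrt 2 := by
  have h2 : Real.sqrt 2 * Real.sqrt 2 = 2 := Real.mul_self_sqrt (by norm_num)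
  have h2' : Real.sqrt 2 ≠ 0 := by positivity
  simp only [psiAux]
  norm_num
  rw [div_eq_iff h2']
  nlinarith [h2]

lemma psiAux_contAt (β : ℝ) (hβ0 : β ≠ 0) : ContinuousAt (psiAux β) 0 := by
  apply ContinuousAt.div (by fun_prop) (by fun_prop)
  have : Real.sqrt (2 - 0) > 0 := Real.sqrt_pos.mpr (by norm_num)
  simp only [zero_div]
  positivity

lemma psiAux_bounds (β : ℝ) {c : ℝ} (hc : 0 < c)
    (hden : ∀ α ∈ Set.Icc (0:ℝ) 1, c ≤ 1 + α / β) {α : ℝ} (hα : α ∈ Set.Icc (0:ℝ) 1) :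
    0 ≤ psiAux β α ∧ psiAux β α ≤ 4 / c := by
  obtain ⟨h0, h1⟩ := hα
  have hd := hden α ⟨h0, h1⟩
  have hs1 : (1:ℝ) ≤ Real.sqrt (2 - α) := by
    rw [show (1:ℝ) = Real.sqrt 1 by simp]
    exact Real.sqrt_le_sqrt (by linarith)
  have hnum0 : 0 ≤ 4 - 6*α + 4*α^2 - α^3 := by nlinarith
  have hnum4 : 4 - 6*α + 4*α^2 - α^3 ≤ 4 := by nlinarith
  have hdpos : 0 < (1 + α/β) * Real.sqrt (2 - α) :=
    mul_pos (hc.trans_le hd) (Real.sqrt_pos.mpr (by linarith))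
  constructor
  · exact div_nonneg hnum0 hdpos.le
  · have hc1 : c * 1 ≤ (1 + α/β) * Real.sqrt (2 - α) :=
      mul_le_mul hd hs1 zero_le_one (by linarith [hc.trans_le hd])
    rw [mul_one] at hc1
    exact div_le_div₀ (by norm_num) hnum4 hc hc1


lemma intAux (β : ℝ) {c : ℝ} (hc : 0 < c)
    (hden : ∀ α ∈ Set.Icc (0:ℝ) 1, c ≤ 1 + α / β) (n : ℕ) :
    IntervalIntegrable (fun α => (1-α)^n / ((1 + α/β) * Real.sqrt (α*(2-α))))
      volume 0 1 := by
  rw [intervalIntegrable_iff_integrableOn_Ioc_of_le zero_le_one]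
  have hmeas : ContinuousOn
      (fun α : ℝ => (1-α)^n / ((1 + α/β) * Real.sqrt (α*(2-α)))) (Ioc 0 1) := by
    apply ContinuousOn.div (by fun_prop) (by fun_prop)
    intro x hx
    have h1 : 0 < 1 + x/β := hc.trans_le (hden x ⟨hx.1.le, hx.2⟩)
    have h2 : 0 < Real.sqrt (x*(2-x)) :=
      Real.sqrt_pos.mpr (mul_pos hx.1 (by linarith [hx.2]))
    positivity
  have hbd : Integrable (fun α : ℝ => c⁻¹ * α ^ (-(1:ℝ)/2)) (volume.restrict (Ioc 0 1)) := by
    have := (intervalIntegral.intervalIntegrable_rpow' (a := (0:ℝ)) (b := 1)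
      (r := -(1:ℝ)/2) (by norm_num)).const_mul c⁻¹
    rwa [intervalIntegrable_iff_integrableOn_Ioc_of_le zero_le_one] at this
  apply Integrable.mono' hbd (hmeas.aestronglyMeasurable measurableSet_Ioc)
  filter_upwards [ae_restrict_mem measurableSet_Ioc] with x hx
  have hx0 : 0 < x := hx.1
  have hx1 : x ≤ 1 := hx.2
  have hd : c ≤ 1 + x/β := hden x ⟨hx0.le, hx1⟩
  have hsx : 0 < Real.sqrt x := Real.sqrt_pos.mpr hx0
  have hnum : |(1-x)^n| ≤ 1 := by
    rw [abs_of_nonneg (pow_nonneg (by linarith) n)]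
    exact pow_le_one₀ (by linarith) (by linarith)
  have hsplit : Real.sqrt (x*(2-x)) = Real.sqrt x * Real.sqrt (2-x) :=
    Real.sqrt_mul hx0.le _
  have hs1 : (1:ℝ) ≤ Real.sqrt (2 - x) := by
    rw [show (1:ℝ) = Real.sqrt 1 by simp]
    exact Real.sqrt_le_sqrt (by linarith)
  have hdenlb : c * Real.sqrt x ≤ (1 + x/β) * Real.sqrt (x*(2-x)) := by
    rw [hsplit]
    calc c * Real.sqrt x ≤ (1 + x/β) * Real.sqrt x :=
          mul_le_mul_of_nonneg_right hd hsx.le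
      _ ≤ (1 + x/β) * (Real.sqrt x * Real.sqrt (2-x)) := by
          rw [mul_le_mul_iff_right₀ (hc.trans_le hd)]
          nlinarith
  have hrpow : x ^ (-(1:ℝ)/2) = (Real.sqrt x)⁻¹ := by
    rw [show -(1:ℝ)/2 = -(1/2) by norm_num, Real.rpow_neg hx0.le, Real.sqrt_eq_rpow]
  rw [Real.norm_eq_abs, abs_div, hrpow]
  have h1 : |(1 + x/β) * Real.sqrt (x*(2-x))| = (1 + x/β) * Real.sqrt (x*(2-x)) :=
    abs_of_pos (lt_of_lt_of_le (by positivity) hdenlb)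
  rw [h1]
  calc |(1-x)^n| / ((1 + x/β) * Real.sqrt (x*(2-x)))
      ≤ 1 / (c * Real.sqrt x) :=
        div_le_div₀ zero_le_one hnum (mul_pos hc hsx) hdenlb
    _ = c⁻¹ * (Real.sqrt x)⁻¹ := by rw [one_div, mul_inv]

lemma part1Aux (β : ℝ) {c : ℝ} (hc : 0 < c)
    (hden : ∀ α ∈ Set.Icc (0:ℝ) 1, c ≤ 1 + α / β) (k : ℕ) :
    (∫ α in (0:ℝ)..1,
        (1 - α) ^ (4 * (k + 1) + 2) / ((1 + α / β) * Real.sqrt (α * (2 - α)))) -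
      (∫ α in (0:ℝ)..1,
        (1 - α) ^ (4 * k + 2) / ((1 + α / β) * Real.sqrt (α * (2 - α)))) =
    ∫ α in (0:ℝ)..1,
      (1 - α) ^ (4 * k + 2) / ((1 + α / β) * Real.sqrt (α * (2 - α))) *
        ((1 - α) ^ 4 - 1) := by
  rw [← intervalIntegral.integral_sub (intAux β hc hden _) (intAux β hc hden _)]
  apply intervalIntegral.integral_congr
  intro x _
  simp only
  rw [show 4*(k+1)+2 = (4*k+2)+4 by ring, pow_add]
  ring

lemma eqJAux (β : ℝ) (k : ℕ) :
    (∫ α in (0:ℝ)..1,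
      (1 - α) ^ (4 * k + 2) / ((1 + α / β) * Real.sqrt (α * (2 - α))) *
        ((1 - α) ^ 4 - 1)) =
    -∫ α in (0:ℝ)..1, Real.sqrt α * (1 - α) ^ (4 * k + 2) * psiAux β α := by
  rw [← intervalIntegral.integral_neg]
  apply intervalIntegral.integral_congr
  intro x hx
  rw [Set.uIcc_of_le zero_le_one] at hx
  simp only [psiAux]
  rcases eq_or_lt_of_le hx.1 with h0 | h0
  · rw [← h0]; norm_num
  rcases eq_or_lt_of_le hx.2 with h1 | h1
  · rw [h1]; norm_num
  -- interior case
  obtain ⟨y, hy0, hxy⟩ : ∃ y : ℝ, 0 < y ∧ x = y^2 :=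
    ⟨Real.sqrt x, Real.sqrt_pos.mpr h0, (Real.sq_sqrt h0.le).symm⟩
  subst hxy
  have hsy : Real.sqrt (y^2) = y := Real.sqrt_sq hy0.le
  have hsplit : Real.sqrt (y^2*(2-y^2)) = y * Real.sqrt (2-y^2) := by
    rw [Real.sqrt_mul (by positivity), hsy]
  have hs2 : 0 < Real.sqrt (2-y^2) := Real.sqrt_pos.mpr (by nlinarith)
  rw [hsplit, hsy]
  by_cases hd : (1 + y^2/β) = 0
  · rw [hd]; norm_num
  field_simp
  ring

lemma substAux (β : ℝ) (k : ℕ) (hk : 1 ≤ k) :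
    (∫ u in (0:ℝ)..(k:ℝ), Real.sqrt u * (1 - u/(k:ℝ))^(4*k+2) * psiAux β (u/(k:ℝ))) =
    Real.sqrt k * ((k:ℝ) * ∫ α in (0:ℝ)..1, Real.sqrt α * (1-α)^(4*k+2) * psiAux β α) := by
  have hk0 : (0:ℝ) < k := by exact_mod_cast hk
  have step1 : (∫ u in (0:ℝ)..(k:ℝ), Real.sqrt u * (1 - u/(k:ℝ))^(4*k+2) * psiAux β (u/(k:ℝ)))
      = ∫ u in (0:ℝ)..(k:ℝ),
          Real.sqrt k * ((fun α => Real.sqrt α * (1-α)^(4*k+2) * psiAux β α) (u/(k:ℝ))) := by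
    apply intervalIntegral.integral_congr
    intro u hu
    rw [Set.uIcc_of_le hk0.le] at hu
    simp only
    rw [Real.sqrt_div hu.1]
    have hsk : Real.sqrt k ≠ 0 := ne_of_gt (Real.sqrt_pos.mpr hk0)
    field_simp
  rw [step1, intervalIntegral.integral_const_mul,
    intervalIntegral.integral_comp_div (fun α => Real.sqrt α * (1-α)^(4*k+2) * psiAux β α)
      (ne_of_gt hk0), zero_div, div_self (ne_of_gt hk0), smul_eq_mul]

lemma dctAux (β : ℝ) (hβ0 : β ≠ 0) {c : ℝ} (hc : 0 < c)
    (hden : ∀ α ∈ Set.Icc (0:ℝ) 1, c ≤ 1 + α / β) :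
    Tendsto (fun k : ℕ =>
        ∫ u in (0:ℝ)..(k:ℝ), Real.sqrt u * (1 - u/(k:ℝ))^(4*k+2) * psiAux β (u/(k:ℝ)))
      atTop (𝓝 ((1/4 : ℝ) ^ ((3:ℝ)/2) * Real.Gamma (3/2) * psiAux β 0)) := by
  set F : ℕ → ℝ → ℝ := fun k =>
    (Ioc (0:ℝ) (k:ℝ)).indicator (fun u => Real.sqrt u * (1 - u/(k:ℝ))^(4*k+2) * psiAux β (u/(k:ℝ)))
    with hF
  set f : ℝ → ℝ := fun u => Real.sqrt u * Real.exp (-(4*u)) * psiAux β 0 with hf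
  set bound : ℝ → ℝ := fun u => (4/c) * (Real.exp (-u) * u ^ ((3:ℝ)/2 - 1)) with hbound
  have hFmeas : ∀ k : ℕ, AEStronglyMeasurable (F k) (volume.restrict (Ioi 0)) := by
    intro k
    apply Measurable.aestronglyMeasurable
    apply Measurable.indicator ?_ measurableSet_Ioc
    simp only [psiAux]
    fun_prop
  have hboundInt : Integrable bound (volume.restrict (Ioi 0)) :=
    (Real.GammaIntegral_convergent (by norm_num : (0:ℝ) < 3/2)).const_mul (4/c)
  have h_bound : ∀ k : ℕ, ∀ᵐ u ∂(volume.restrict (Ioi 0)), ‖F k u‖ ≤ bound u := by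
    intro k
    filter_upwards [ae_restrict_mem measurableSet_Ioi] with u hu
    have hu0 : (0:ℝ) < u := hu
    have hbnn : 0 ≤ bound u := by
      have h1 : (0:ℝ) ≤ u ^ ((3:ℝ)/2 - 1) := Real.rpow_nonneg hu0.le _
      have h2 : (0:ℝ) < Real.exp (-u) := Real.exp_pos _
      positivity
    by_cases hmem : u ∈ Ioc (0:ℝ) (k:ℝ)
    · simp only [hF]
      rw [Set.indicator_of_mem hmem]
      have huk : u ≤ (k:ℝ) := hmem.2
      have hk0 : (0:ℝ) < (k:ℝ) := hu0.trans_le huk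
      have hdk : u/(k:ℝ) ≤ 1 := (div_le_one hk0).mpr huk
      have hdiv : u/(k:ℝ) ∈ Set.Icc (0:ℝ) 1 := ⟨by positivity, hdk⟩
      have hψ := psiAux_bounds β hc hden hdiv
      have h1mk : 0 ≤ 1 - u/(k:ℝ) := by linarith
      have hpow : (1 - u/(k:ℝ))^(4*k+2) ≤ Real.exp (-u) := by
        calc (1 - u/(k:ℝ))^(4*k+2) ≤ (Real.exp (-(u/(k:ℝ))))^(4*k+2) :=
              pow_le_pow_left₀ h1mk (by linarith [Real.add_one_le_exp (-(u/(k:ℝ)))]) _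
          _ = Real.exp ((4*k+2 : ℕ) * (-(u/(k:ℝ)))) := (Real.exp_nat_mul _ _).symm
          _ ≤ Real.exp (-u) := by
              apply Real.exp_le_exp.mpr
              have hcast : ((4*k+2 : ℕ) : ℝ) = 4*(k:ℝ)+2 := by push_cast; ring
              rw [hcast, mul_neg, neg_le_neg_iff, ← mul_div_assoc, le_div_iff₀ hk0]
              nlinarith
      have hnn : 0 ≤ Real.sqrt u * (1 - u/(k:ℝ))^(4*k+2) * psiAux β (u/(k:ℝ)) := by
        have := hψ.1
        positivity
      rw [Real.norm_eq_abs, abs_of_nonneg hnn]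
      calc Real.sqrt u * (1 - u/(k:ℝ))^(4*k+2) * psiAux β (u/(k:ℝ))
          ≤ (Real.sqrt u * Real.exp (-u)) * (4/c) :=
            mul_le_mul (mul_le_mul_of_nonneg_left hpow (Real.sqrt_nonneg u)) hψ.2 hψ.1
              (by positivity)
        _ = bound u := by
            rw [hbound]
            simp only
            rw [Real.sqrt_eq_rpow, show (3:ℝ)/2 - 1 = 1/2 by norm_num]
            ring
    · simp only [hF]
      rw [Set.indicator_of_notMem hmem, norm_zero]
      exact hbnn
  have h_lim : ∀ᵐ u ∂(volume.restrict (Ioi 0)),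
      Tendsto (fun k : ℕ => F k u) atTop (𝓝 (f u)) := by
    filter_upwards [ae_restrict_mem measurableSet_Ioi] with u hu
    have hu0 : (0:ℝ) < u := hu
    have hbase : Tendsto (fun k : ℕ => 1 + (-u)/(k:ℝ)) atTop (𝓝 1) := by
      have := tendsto_const_div_atTop_nhds_zero_nat (-u)
      have h := tendsto_const_nhds (x := (1:ℝ)) (f := atTop (α := ℕ)) |>.add this
      simpa using h
    have hA : Tendsto (fun k : ℕ => (1 - u/(k:ℝ))^(4*k+2)) atTop (𝓝 (Real.exp (-(4*u)))) := by
      have heq : ∀ k : ℕ, (1 - u/(k:ℝ))^(4*k+2)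
          = ((1 + (-u)/(k:ℝ))^k)^4 * (1 + (-u)/(k:ℝ))^2 := by
        intro k
        rw [show (1:ℝ) - u/(k:ℝ) = 1 + (-u)/(k:ℝ) by ring,
          show 4*k+2 = k*4+2 by ring, pow_add, pow_mul]
      have h1 : Tendsto (fun k : ℕ => ((1 + (-u)/(k:ℝ))^k)^4 * (1 + (-u)/(k:ℝ))^2)
          atTop (𝓝 ((Real.exp (-u))^4 * 1^2)) :=
        ((tendsto_one_add_div_pow_exp (-u)).pow 4).mul (hbase.pow 2)
      have : (Real.exp (-u))^4 * 1^2 = Real.exp (-(4*u)) := by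
        rw [← Real.exp_nat_mul]
        norm_num
      rw [this] at h1
      exact h1.congr (fun k => (heq k).symm)
    have hψt : Tendsto (fun k : ℕ => psiAux β (u/(k:ℝ))) atTop (𝓝 (psiAux β 0)) := by
      have := (psiAux_contAt β hβ0).tendsto.comp (tendsto_const_div_atTop_nhds_zero_nat u)
      exact this
    have hinner : Tendsto (fun k : ℕ => Real.sqrt u * (1 - u/(k:ℝ))^(4*k+2) * psiAux β (u/(k:ℝ)))
        atTop (𝓝 (f u)) := (tendsto_const_nhds.mul hA).mul hψt
    refine Tendsto.congr' ?_ hinner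
    filter_upwards [eventually_ge_atTop ⌈u⌉₊] with k hk
    have : u ≤ (k:ℝ) := (Nat.le_ceil u).trans (by exact_mod_cast hk)
    simp only [hF]
    rw [Set.indicator_of_mem (show u ∈ Ioc (0:ℝ) (k:ℝ) from ⟨hu0, this⟩)]
  have key := tendsto_integral_of_dominated_convergence bound hFmeas hboundInt h_bound h_lim
  have hval : (∫ u in Ioi (0:ℝ), f u)
      = (1/4 : ℝ) ^ ((3:ℝ)/2) * Real.Gamma (3/2) * psiAux β 0 := by
    have : (∫ u in Ioi (0:ℝ), f u)
        = ∫ u in Ioi (0:ℝ), (u ^ ((3:ℝ)/2 - 1) * Real.exp (-(4*u))) * psiAux β 0 := by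
      apply setIntegral_congr_fun measurableSet_Ioi
      intro u hu
      rw [hf]
      simp only
      rw [Real.sqrt_eq_rpow, show (3:ℝ)/2 - 1 = 1/2 by norm_num]
    rw [this, MeasureTheory.integral_mul_const,
      Real.integral_rpow_mul_exp_neg_mul_Ioi (by norm_num : (0:ℝ) < 3/2) (by norm_num : (0:ℝ) < 4)]
  have hident : ∀ k : ℕ,
      (∫ u in (0:ℝ)..(k:ℝ), Real.sqrt u * (1 - u/(k:ℝ))^(4*k+2) * psiAux β (u/(k:ℝ)))
      = ∫ u in Ioi (0:ℝ), F k u := by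
    intro k
    simp only [hF]
    rw [setIntegral_indicator measurableSet_Ioc,
      show Ioi (0:ℝ) ∩ Ioc (0:ℝ) (k:ℝ) = Ioc (0:ℝ) (k:ℝ) by
        rw [Set.inter_eq_right]; exact Ioc_subset_Ioi_self,
      intervalIntegral.integral_of_le (by positivity : (0:ℝ) ≤ (k:ℝ))]
  rw [← hval]
  exact key.congr (fun k => (hident k).symm)

theorem stmt_16 (β : ℝ) (hβ : 0 < β ∨ β < -1) :
    (∀ k : ℕ,
      (∫ α in (0:ℝ)..1,
          (1 - α) ^ (4 * (k + 1) + 2) / ((1 + α / β) * Real.sqrt (α * (2 - α)))) -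
        (∫ α in (0:ℝ)..1,
          (1 - α) ^ (4 * k + 2) / ((1 + α / β) * Real.sqrt (α * (2 - α)))) =
      ∫ α in (0:ℝ)..1,
        (1 - α) ^ (4 * k + 2) / ((1 + α / β) * Real.sqrt (α * (2 - α))) *
          ((1 - α) ^ 4 - 1)) ∧
    Filter.Tendsto
      (fun k : ℕ =>
        ((∫ α in (0:ℝ)..1,
            (1 - α) ^ (4 * (k + 1) + 2) / ((1 + α / β) * Real.sqrt (α * (2 - α)))) -
          (∫ α in (0:ℝ)..1,
            (1 - α) ^ (4 * k + 2) / ((1 + α / β) * Real.sqrt (α * (2 - α))))) /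
          (-(Real.sqrt Real.pi / (4 * Real.sqrt 2 * (k : ℝ) ^ ((3 : ℝ) / 2)))))
      Filter.atTop (nhds 1) := by
  obtain ⟨c, hc, hden⟩ := denAux β hβ
  have hβ0 : β ≠ 0 := by rcases hβ with h | h <;> intro h'  <;> rw [h'] at h <;> norm_num at h
  refine ⟨fun k => part1Aux β hc hden k, ?_⟩
  have hDCT := dctAux β hβ0 hc hden
  have hπ : (0:ℝ) < Real.sqrt π := Real.sqrt_pos.mpr Real.pi_pos
  have h2 : Real.sqrt 2 * Real.sqrt 2 = 2 := Real.mul_self_sqrt (by norm_num)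
  have h2' : (0:ℝ) < Real.sqrt 2 := by norm_num [Real.sqrt_pos]
  have hΓ : Real.Gamma (3/2) = Real.sqrt π / 2 := by
    rw [show (3/2:ℝ) = 1/2 + 1 by norm_num, Real.Gamma_add_one (by norm_num),
      Real.Gamma_one_half_eq]
    ring
  have h14 : (1/4:ℝ)^((3:ℝ)/2) = 1/8 := by
    rw [show (1/4:ℝ) = (1/2:ℝ)^(2:ℕ) by norm_num, ← Real.rpow_natCast (1/2:ℝ) 2,
      ← Real.rpow_mul (by norm_num), show ((2:ℕ):ℝ)*((3:ℝ)/2) = ((3:ℕ):ℝ) by norm_num,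
      Real.rpow_natCast]
    norm_num
  have hVval : (1/4 : ℝ) ^ ((3:ℝ)/2) * Real.Gamma (3/2) * psiAux β 0
      * (4 * Real.sqrt 2 / Real.sqrt π) = 1 := by
    rw [h14, hΓ, psiAux_zero]
    field_simp
    nlinarith [h2]
  have h3 := hDCT.mul_const (4 * Real.sqrt 2 / Real.sqrt π)
  rw [hVval] at h3
  apply h3.congr'
  filter_upwards [eventually_ge_atTop 1] with k hk
  have hk0 : (0:ℝ) < (k:ℝ) := by exact_mod_cast hk
  have hsk : (0:ℝ) < Real.sqrt k := Real.sqrt_pos.mpr hk0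
  have hrpow : (k:ℝ)^((3:ℝ)/2) = (k:ℝ) * Real.sqrt k := by
    rw [show (3:ℝ)/2 = 1 + 1/2 by norm_num, Real.rpow_add hk0, Real.rpow_one,
      ← Real.sqrt_eq_rpow]
  rw [part1Aux β hc hden k, eqJAux β k, substAux β k hk, hrpow]
  field_simp
end

section
/- Let $Q(x)$ be the $2n \times 2n$ matrix over $\mathbb{Q}[x]$ with entries $Q_{i,j}(x) = \sum_{l=0}^{i-1}\frac{j-i}{i}\binom{j-1}{i-l-1}\binom{l+j}{l}\binom{2x+2n+1}{l+j+1}$ (generalized binomial coefficient in $x$), $1 \le i,j \le 2n$. Then for every integer $s$ with $1 \le s \le n$ and all integers $a, b$ with $1 \le a \le b \le 2n$ satisfying $a - b \le 2n-2s < a$: $\sum_{i=a}^{b} \binom{b-a}{i-a}\, Q_{i,j}(-s) = 0$ for every $j$ with $1 \le j \le 2n$. -/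
/-- Generalized binomial coefficient `y` choose `r` as a rational number,
for rational `y` and natural `r`. -/
noncomputable def gbinom (y : ℚ) (r : ℕ) : ℚ :=
  (∏ t ∈ Finset.range r, (y - t)) / r.factorial

/-- The entry `Q_{i,j}(x)` of the matrix `Q(x)`. -/
noncomputable def Qent (n i j : ℕ) (x : ℚ) : ℚ :=
  ∑ l ∈ Finset.range i,
    ((j : ℚ) - i) / i * Nat.choose (j - 1) (i - l - 1) *
      Nat.choose (l + j) l * gbinom (2 * x + 2 * n + 1) (l + j + 1)

lemma prod_cast_eq_descFactorial (N r : ℕ) :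
    ∏ t ∈ Finset.range r, ((N : ℚ) - t) = (N.descFactorial r : ℚ) := by
  rcases le_or_gt r N with h | h
  · rw [Nat.descFactorial_eq_prod_range, Nat.cast_prod]
    refine Finset.prod_congr rfl fun t ht => ?_
    rw [Finset.mem_range] at ht
    rw [Nat.cast_sub (by omega)]
  · rw [Nat.descFactorial_eq_zero_iff_lt.mpr h, Nat.cast_zero]
    apply Finset.prod_eq_zero (Finset.mem_range.mpr h)
    simp

/-- gbinom at a natural argument is the usual binomial coefficient. -/
lemma gbinom_natCast (N r : ℕ) : gbinom (N : ℚ) r = N.choose r := by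
  unfold gbinom
  rw [prod_cast_eq_descFactorial, Nat.descFactorial_eq_factorial_mul_choose]
  push_cast
  rw [mul_comm, mul_div_assoc, div_self (by positivity), mul_one]

/-- Trinomial revision identity. -/
lemma term_trinom (M l j : ℕ) :
    Nat.choose (l + j) l * Nat.choose M (l + j) = Nat.choose M j * Nat.choose (M - j) l := by
  rcases le_or_gt (l + j) M with h | h
  · have h1 : Nat.choose (l + j) l = Nat.choose (l + j) j := Nat.choose_symm_add
    rw [h1, mul_comm, Nat.choose_mul (n := M) (show j ≤ l + j by omega)]
    congr 1
    congr 1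
    omega
  · rw [Nat.choose_eq_zero_of_lt h, mul_zero]
    rcases le_or_gt j M with h2 | h2
    · rw [Nat.choose_eq_zero_of_lt (show M - j < l by omega), mul_zero]
    · rw [Nat.choose_eq_zero_of_lt h2, zero_mul]

/-- The key vanishing of the inner sum, by trinomial revision and Vandermonde. -/
lemma inner_zero (i j M : ℕ) (hi : 1 ≤ i) (hj : 1 ≤ j) (hM : M < i) :
    ∑ l ∈ Finset.range i,
      Nat.choose (j - 1) (i - l - 1) * (Nat.choose (l + j) l * Nat.choose M (l + j)) = 0 := by
  obtain ⟨k, rfl⟩ : ∃ k, i = k + 1 := ⟨i - 1, by omega⟩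
  have step : ∑ l ∈ Finset.range (k+1),
      Nat.choose (j - 1) (k + 1 - l - 1) * (Nat.choose (l + j) l * Nat.choose M (l + j))
      = Nat.choose M j * ∑ l ∈ Finset.range (k+1),
          Nat.choose (M - j) l * Nat.choose (j-1) (k - l) := by
    rw [Finset.mul_sum]
    refine Finset.sum_congr rfl fun l hl => ?_
    rw [term_trinom, show k + 1 - l - 1 = k - l by omega]
    ring
  rw [step]
  rcases le_or_gt j M with h2 | h2
  · have hV : ∑ l ∈ Finset.range (k+1),
        Nat.choose (M - j) l * Nat.choose (j-1) (k - l)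
        = Nat.choose ((M - j) + (j - 1)) k := by
      rw [Nat.add_choose_eq]
      rw [Finset.Nat.sum_antidiagonal_eq_sum_range_succ
        (fun x y => Nat.choose (M-j) x * Nat.choose (j-1) y)]
    have hz : (M - j) + (j - 1) < k := by omega
    rw [hV, Nat.choose_eq_zero_of_lt hz, mul_zero]
  · rw [Nat.choose_eq_zero_of_lt h2, zero_mul]

/-- The main vanishing, proved by induction on the upper binomial argument. -/
lemma F_zero (a b j : ℕ) (ha : 1 ≤ a) (hj : 1 ≤ j) :
    ∀ M, M ≤ a →
      ∑ i ∈ Finset.Icc a b, ∑ l ∈ Finset.range i,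
        (Nat.choose (b - a) (i - a) : ℚ) * (((j : ℚ) - i) / i *
          Nat.choose (j - 1) (i - l - 1) * Nat.choose (l + j) l *
          Nat.choose M (l + j + 1)) = 0 := by
  intro M
  induction M with
  | zero =>
    intro _
    refine Finset.sum_eq_zero fun i _ => Finset.sum_eq_zero fun l _ => ?_
    rw [show Nat.choose 0 (l + j + 1) = 0 from Nat.choose_eq_zero_of_lt (by omega)]
    simp
  | succ M ih =>
    intro hMa
    have pascal : ∀ l : ℕ, ((M+1).choose (l + j + 1) : ℚ)
        = (M.choose (l + j) : ℚ) + (M.choose (l + j + 1) : ℚ) := by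
      intro l
      rw [Nat.choose_succ_succ]
      push_cast
      ring
    have split : ∑ i ∈ Finset.Icc a b, ∑ l ∈ Finset.range i,
        (Nat.choose (b - a) (i - a) : ℚ) * (((j : ℚ) - i) / i *
          Nat.choose (j - 1) (i - l - 1) * Nat.choose (l + j) l *
          Nat.choose (M+1) (l + j + 1))
        = (∑ i ∈ Finset.Icc a b, ∑ l ∈ Finset.range i,
            (Nat.choose (b - a) (i - a) : ℚ) * (((j : ℚ) - i) / i *
              Nat.choose (j - 1) (i - l - 1) * Nat.choose (l + j) l *
              Nat.choose M (l + j)))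
          + ∑ i ∈ Finset.Icc a b, ∑ l ∈ Finset.range i,
            (Nat.choose (b - a) (i - a) : ℚ) * (((j : ℚ) - i) / i *
              Nat.choose (j - 1) (i - l - 1) * Nat.choose (l + j) l *
              Nat.choose M (l + j + 1)) := by
      rw [← Finset.sum_add_distrib]
      refine Finset.sum_congr rfl fun i _ => ?_
      rw [← Finset.sum_add_distrib]
      refine Finset.sum_congr rfl fun l _ => ?_
      rw [pascal l]
      ring
    rw [split, ih (by omega), add_zero]
    refine Finset.sum_eq_zero fun i hi => ?_
    rw [Finset.mem_Icc] at hi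
    have hi1 : 1 ≤ i := le_trans ha hi.1
    have hMi : M < i := by omega
    have key := inner_zero i j M hi1 hj hMi
    calc ∑ l ∈ Finset.range i,
          (Nat.choose (b - a) (i - a) : ℚ) * (((j : ℚ) - i) / i *
            Nat.choose (j - 1) (i - l - 1) * Nat.choose (l + j) l *
            Nat.choose M (l + j))
        = (Nat.choose (b - a) (i - a) : ℚ) * (((j : ℚ) - i) / i) *
            ∑ l ∈ Finset.range i,
              ((Nat.choose (j - 1) (i - l - 1) * (Nat.choose (l + j) l *
                Nat.choose M (l + j)) : ℕ) : ℚ) := by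
          rw [Finset.mul_sum]
          refine Finset.sum_congr rfl fun l _ => ?_
          push_cast
          ring
      _ = 0 := by
          rw [← Nat.cast_sum, key]
          simp

theorem stmt_19 (n s a b : ℕ) (hs : 1 ≤ s) (hsn : s ≤ n)
    (ha : 1 ≤ a) (hab : a ≤ b) (hb : b ≤ 2 * n)
    (h1 : (a : ℤ) - b ≤ 2 * n - 2 * s) (h2 : (2 * n - 2 * s : ℤ) < a) :
    ∀ j : ℕ, 1 ≤ j → j ≤ 2 * n →
      ∑ i ∈ Finset.Icc a b,
          (Nat.choose (b - a) (i - a) : ℚ) * Qent n i j (-(s : ℚ)) = 0 := by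
  intro j hj1 _
  set M : ℕ := 2 * (n - s) + 1 with hM
  have hMa : M ≤ a := by omega
  have hcast : (2 : ℚ) * (-(s : ℚ)) + 2 * n + 1 = ((M : ℕ) : ℚ) := by
    rw [hM]
    push_cast [Nat.cast_sub hsn]
    ring
  have hterm : ∀ i ∈ Finset.Icc a b,
      (Nat.choose (b - a) (i - a) : ℚ) * Qent n i j (-(s : ℚ))
      = ∑ l ∈ Finset.range i,
          (Nat.choose (b - a) (i - a) : ℚ) * (((j : ℚ) - i) / i *
            Nat.choose (j - 1) (i - l - 1) * Nat.choose (l + j) l *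
            Nat.choose M (l + j + 1)) := by
    intro i _
    unfold Qent
    rw [Finset.mul_sum]
    refine Finset.sum_congr rfl fun l _ => ?_
    rw [hcast, gbinom_natCast]
  rw [Finset.sum_congr rfl hterm]
  exact F_zero a b j ha hj1 M hMa
end
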